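/- arXiv:2106.08903 — 2 statements merged into one kernel-verified Lean document; each statement's English description precedes it below -/
import Mathlib

section
/- Let d, n, k be natural numbers with n ≥ 1. Let h be a function taking a point configuration X : Fin n → EuclideanSpace ℝ (Fin d) together with per-point scalar features H : Fin n → (Fin k → ℝ) and returning an output h(X,H) : Fin n → EuclideanSpace ℝ (Fin d), such that h is: (i) permutation-equivariant, i.e. h(σ·X, σ·H) = σ·(h(X,H)) for every permutation σ of Fin n; (ii) rotation-equivariant, i.e. h(R·X, H) = R·(h(X,H)) for every R ∈ SO(d); and (iii) translation-invariant, i.e. h(X + t, H) = h(X,H) for every t ∈ EuclideanSpace ℝ (Fin d). Then there exist functions f⁽ᶜ⁾ : (Fin n → EuclideanSpace ℝ (Fin d)) × (Fin n → (Fin k → ℝ)) → (Fin n → ℝ), indexed by c ∈ Fin n, each of which is translation-invariant, rotation-invariant, and permutation-equivariant in the sense that f⁽σ c⁾(σ·X, σ·H)_{σ a} = f⁽ᶜ⁾(X,H)_a for all σ, a, c, such that: for every input (X, H) with the property that for every a ∈ Fin n the family of relative vectors {X_c − X_a : c ∈ Fin n} does not span a subspace of dimension exactly d − 1, and for every a ∈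 Fin n, one has h(X,H)_a = Σ_{c ∈ Fin n, c ≠ a} f⁽ᶜ⁾(X,H)_a • (X_c − X_a). -/
open scoped RealInnerProductSpace

/-- `R` is a special orthogonal transformation: a linear isometry (orthogonal map)
of determinant 1. -/
def IsSpecialOrthogonal {d : ℕ}
    (R : EuclideanSpace ℝ (Fin d) ≃ₗᵢ[ℝ] EuclideanSpace ℝ (Fin d)) : Prop :=
  LinearMap.det (R.toLinearEquiv : EuclideanSpace ℝ (Fin d) →ₗ[ℝ] EuclideanSpace ℝ (Fin d)) = 1

noncomputable def TmapAux (d n : ℕ) (v : Fin n → EuclideanSpace ℝ (Fin d)) :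
    EuclideanSpace ℝ (Fin n) →ₗ[ℝ] EuclideanSpace ℝ (Fin d) where
  toFun g := ∑ c, g c • v c
  map_add' g g' := by
    simp only [PiLp.add_apply, add_smul]
    rw [Finset.sum_add_distrib]
  map_smul' r g := by
    simp only [PiLp.smul_apply, smul_eq_mul, RingHom.id_apply, ← smul_smul]
    rw [← Finset.smul_sum]

lemma TmapAux_apply (d n : ℕ) (v : Fin n → EuclideanSpace ℝ (Fin d))
    (g : EuclideanSpace ℝ (Fin n)) : TmapAux d n v g = ∑ c, g c • v c := rfl

noncomputable def coeffsAux (d n : ℕ) (v : Fin n → EuclideanSpace ℝ (Fin d))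
    (w : EuclideanSpace ℝ (Fin d)) : EuclideanSpace ℝ (Fin n) :=
  letI := Classical.dec (∃ g, TmapAux d n v g = w)
  if hex : ∃ g, TmapAux d n v g = w then
    ((Submodule.orthogonalProjection (LinearMap.ker (TmapAux d n v))ᗮ hex.choose :
      (LinearMap.ker (TmapAux d n v))ᗮ) : EuclideanSpace ℝ (Fin n))
  else 0

lemma coeffsAux_eq {d n : ℕ} {v : Fin n → EuclideanSpace ℝ (Fin d)}
    {w : EuclideanSpace ℝ (Fin d)} {g : EuclideanSpace ℝ (Fin n)}
    (hg : TmapAux d n v g = w) :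
    coeffsAux d n v w
      = ((Submodule.orthogonalProjection (LinearMap.ker (TmapAux d n v))ᗮ g :
          (LinearMap.ker (TmapAux d n v))ᗮ) : EuclideanSpace ℝ (Fin n)) := by
  have hex : ∃ g, TmapAux d n v g = w := ⟨g, hg⟩
  rw [coeffsAux, dif_pos hex]
  have hker : hex.choose - g ∈ LinearMap.ker (TmapAux d n v) := by
    rw [LinearMap.mem_ker, map_sub, hex.choose_spec, hg, sub_self]
  have h0 : Submodule.orthogonalProjection (LinearMap.ker (TmapAux d n v))ᗮ (hex.choose - g) = 0 :=
    Submodule.orthogonalProjectionOnto_apply_of_mem_orthogonal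
      (by rwa [Submodule.orthogonal_orthogonal])
  have hsub := map_sub (Submodule.orthogonalProjection (LinearMap.ker (TmapAux d n v))ᗮ) hex.choose g
  rw [h0] at hsub
  have h2 : Submodule.orthogonalProjection (LinearMap.ker (TmapAux d n v))ᗮ hex.choose
      = Submodule.orthogonalProjection (LinearMap.ker (TmapAux d n v))ᗮ g :=
    sub_eq_zero.mp hsub.symm
  exact congrArg _ h2

lemma coeffsAux_spec {d n : ℕ} {v : Fin n → EuclideanSpace ℝ (Fin d)}
    {w : EuclideanSpace ℝ (Fin d)} (hex : ∃ g, TmapAux d n v g = w) :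
    TmapAux d n v (coeffsAux d n v w) = w := by
  obtain ⟨g, hg⟩ := hex
  rw [coeffsAux_eq hg]
  have h1 : g - ((Submodule.orthogonalProjection (LinearMap.ker (TmapAux d n v))ᗮ g :
      (LinearMap.ker (TmapAux d n v))ᗮ) : EuclideanSpace ℝ (Fin n))
      ∈ LinearMap.ker (TmapAux d n v) := by
    have := Submodule.sub_starProjection_mem_orthogonal
      (K := (LinearMap.ker (TmapAux d n v))ᗮ) g
    rwa [Submodule.orthogonal_orthogonal] at this
  have h2 := LinearMap.mem_ker.mp h1
  rw [map_sub, sub_eq_zero] at h2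
  rw [← h2, hg]

-- orthogonal map lemma
lemma orthogonal_map_aux {F : Type*} [NormedAddCommGroup F] [InnerProductSpace ℝ F]
    (P : F ≃ₗᵢ[ℝ] F) (K : Submodule ℝ F) :
    (K.map (P.toLinearEquiv : F →ₗ[ℝ] F))ᗮ = Kᗮ.map (P.toLinearEquiv : F →ₗ[ℝ] F) := by
  ext x
  constructor
  · intro hx
    refine Submodule.mem_map.mpr ⟨P.symm x, ?_, by simp⟩
    intro u hu
    calc ⟪u, P.symm x⟫ = ⟪P u, P (P.symm x)⟫ := (P.inner_map_map u (P.symm x)).symm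
      _ = ⟪P u, x⟫ := by rw [P.apply_symm_apply]
      _ = 0 := hx (P u) (Submodule.mem_map_of_mem hu)
  · intro hx
    obtain ⟨y, hy, rfl⟩ := Submodule.mem_map.mp hx
    intro u hu
    obtain ⟨z, hz, rfl⟩ := Submodule.mem_map.mp hu
    calc ⟪(P.toLinearEquiv : F →ₗ[ℝ] F) z, (P.toLinearEquiv : F →ₗ[ℝ] F) y⟫
        = ⟪P z, P y⟫ := rfl
      _ = ⟪z, y⟫ := P.inner_map_map z y
      _ = 0 := hy z hz

lemma orthogonalProjection_map_aux {F : Type*} [NormedAddCommGroup F] [InnerProductSpace ℝ F]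
    [FiniteDimensional ℝ F] (P : F ≃ₗᵢ[ℝ] F) (K : Submodule ℝ F) (x : F) :
    ((Submodule.orthogonalProjection (K.map (P.toLinearEquiv : F →ₗ[ℝ] F)) (P x) :
        K.map (P.toLinearEquiv : F →ₗ[ℝ] F)) : F)
      = P ((Submodule.orthogonalProjection K x : K) : F) := by
  rw [← Submodule.starProjection_apply]
  apply Submodule.eq_starProjection_of_mem_orthogonal
  · exact Submodule.mem_map_of_mem (Submodule.orthogonalProjection K x).2
  · rw [orthogonal_map_aux]
    refine Submodule.mem_map.mpr
      ⟨x - ((Submodule.orthogonalProjection K x : K) : F),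
        Submodule.sub_starProjection_mem_orthogonal x, ?_⟩
    simp [map_sub]

lemma orthogonalProjection_orthogonal_map_aux {F : Type*} [NormedAddCommGroup F]
    [InnerProductSpace ℝ F] [FiniteDimensional ℝ F] (P : F ≃ₗᵢ[ℝ] F) (K : Submodule ℝ F)
    (x : F) :
    ((Submodule.orthogonalProjection (K.map (P.toLinearEquiv : F →ₗ[ℝ] F))ᗮ (P x) :
        (K.map (P.toLinearEquiv : F →ₗ[ℝ] F))ᗮ) : F)
      = P ((Submodule.orthogonalProjection Kᗮ x : Kᗮ) : F) := by
  rw [← Submodule.starProjection_apply]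
  apply Submodule.eq_starProjection_of_mem_orthogonal
  · intro u hu
    obtain ⟨z, hz, rfl⟩ := Submodule.mem_map.mp hu
    calc ⟪(P.toLinearEquiv : F →ₗ[ℝ] F) z, P ((Submodule.orthogonalProjection Kᗮ x : Kᗮ) : F)⟫
        = ⟪z, ((Submodule.orthogonalProjection Kᗮ x : Kᗮ) : F)⟫ := P.inner_map_map _ _
      _ = 0 := (Submodule.mem_orthogonal K _).mp (Submodule.orthogonalProjection Kᗮ x).2 z hz
  · apply Submodule.le_orthogonal_orthogonal
    have hmem : x - ((Submodule.orthogonalProjection Kᗮ x : Kᗮ) : F) ∈ K := by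
      have := Submodule.sub_starProjection_mem_orthogonal (K := Kᗮ) x
      rwa [Submodule.orthogonal_orthogonal] at this
    have := Submodule.mem_map_of_mem (f := (P.toLinearEquiv : F →ₗ[ℝ] F)) hmem
    simpa [map_sub] using this

lemma coeffsAux_rot {d n : ℕ} (R : EuclideanSpace ℝ (Fin d) ≃ₗᵢ[ℝ] EuclideanSpace ℝ (Fin d))
    (v : Fin n → EuclideanSpace ℝ (Fin d)) (w : EuclideanSpace ℝ (Fin d)) :
    coeffsAux d n (fun c => R (v c)) (R w) = coeffsAux d n v w := by
  have hT : ∀ g, TmapAux d n (fun c => R (v c)) g = R (TmapAux d n v g) := by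
    intro g
    simp [TmapAux_apply, map_sum, map_smul]
  have hker : LinearMap.ker (TmapAux d n (fun c => R (v c))) = LinearMap.ker (TmapAux d n v) := by
    ext g
    simp [LinearMap.mem_ker, hT]
  by_cases hex : ∃ g, TmapAux d n v g = w
  · obtain ⟨g, hg⟩ := hex
    rw [coeffsAux_eq (show TmapAux d n (fun c => R (v c)) g = R w by rw [hT, hg]),
      coeffsAux_eq hg, hker]
  · have hex' : ¬ ∃ g, TmapAux d n (fun c => R (v c)) g = R w := by
      rintro ⟨g, hg⟩
      exact hex ⟨g, R.injective (by rw [← hT, hg])⟩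
    rw [coeffsAux, dif_neg hex', coeffsAux, dif_neg hex]

lemma coeffsAux_perm {d n : ℕ} (σ : Equiv.Perm (Fin n)) (v : Fin n → EuclideanSpace ℝ (Fin d))
    (w : EuclideanSpace ℝ (Fin d)) (c : Fin n) :
    coeffsAux d n (fun b => v (σ⁻¹ b)) w (σ c) = coeffsAux d n v w c := by
  set P : EuclideanSpace ℝ (Fin n) ≃ₗᵢ[ℝ] EuclideanSpace ℝ (Fin n) :=
    LinearIsometryEquiv.piLpCongrLeft 2 ℝ ℝ (σ : Fin n ≃ Fin n) with hPdef
  have hP : ∀ (g : EuclideanSpace ℝ (Fin n)) (b : Fin n), P g b = g (σ⁻¹ b) := by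
    intro g b
    rw [hPdef, LinearIsometryEquiv.piLpCongrLeft_apply]
    rfl
  have hT : ∀ g, TmapAux d n (fun b => v (σ⁻¹ b)) (P g) = TmapAux d n v g := by
    intro g
    simp only [TmapAux_apply, hP]
    exact Equiv.sum_comp (σ⁻¹ : Equiv.Perm (Fin n)) (fun c => g c • v c)
  have key : ∀ g, TmapAux d n (fun b => v (σ⁻¹ b)) g = TmapAux d n v (P.symm g) := by
    intro g
    have := hT (P.symm g)
    rwa [P.apply_symm_apply] at this
  have hker : LinearMap.ker (TmapAux d n (fun b => v (σ⁻¹ b)))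
      = (LinearMap.ker (TmapAux d n v)).map
          (P.toLinearEquiv : EuclideanSpace ℝ (Fin n) →ₗ[ℝ] EuclideanSpace ℝ (Fin n)) := by
    ext g
    simp only [LinearMap.mem_ker, Submodule.mem_map, key]
    constructor
    · intro hg
      exact ⟨P.symm g, hg, by simp⟩
    · rintro ⟨y, hy, rfl⟩
      simpa using hy
  by_cases hex : ∃ g, TmapAux d n v g = w
  · obtain ⟨g, hg⟩ := hex
    have hg' : TmapAux d n (fun b => v (σ⁻¹ b)) (P g) = w := by rw [hT, hg]
    rw [coeffsAux_eq hg', coeffsAux_eq hg, hker,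
      orthogonalProjection_orthogonal_map_aux, hP, Equiv.Perm.coe_inv, Equiv.symm_apply_apply]
  · have hex' : ¬ ∃ g, TmapAux d n (fun b => v (σ⁻¹ b)) g = w := by
      rintro ⟨g, hg⟩
      exact hex ⟨P.symm g, by rw [← key, hg]⟩
    rw [coeffsAux, dif_neg hex', coeffsAux, dif_neg hex]
    rfl

lemma exists_so_reflection (d : ℕ) (u₀ u₁ : EuclideanSpace ℝ (Fin d))
    (h01 : ⟪u₀, u₁⟫ = 0) (n0 : ‖u₀‖ = 1) (n1 : ‖u₁‖ = 1) :
    ∃ R : EuclideanSpace ℝ (Fin d) ≃ₗᵢ[ℝ] EuclideanSpace ℝ (Fin d),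
      IsSpecialOrthogonal R ∧ R u₀ = -u₀ ∧ R u₁ = -u₁ ∧
        ∀ x, ⟪u₀, x⟫ = 0 → ⟪u₁, x⟫ = 0 → R x = x := by
  classical
  have hne : u₀ ≠ u₁ := by
    intro he
    rw [he, real_inner_self_eq_norm_sq, n1] at h01
    norm_num at h01
  set W : Submodule ℝ (EuclideanSpace ℝ (Fin d)) := Submodule.span ℝ {u₀, u₁} with hWdef
  have hu₀W : u₀ ∈ W := Submodule.subset_span (by simp)
  have hu₁W : u₁ ∈ W := Submodule.subset_span (by simp)
  have hfix : ∀ x, ⟪u₀, x⟫ = 0 → ⟪u₁, x⟫ = 0 → Submodule.reflection Wᗮ x = x := by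
    intro x hx0 hx1
    apply Submodule.reflection_mem_subspace_eq_self
    intro y hy
    induction hy using Submodule.span_induction with
    | mem y hy =>
      rcases hy with rfl | hy
      · exact hx0
      · rw [Set.mem_singleton_iff] at hy; subst hy; exact hx1
    | zero => simp
    | add y z _ _ hy hz => rw [inner_add_left, hy, hz, add_zero]
    | smul r y _ hy => rw [real_inner_smul_left, hy, mul_zero]
  have hneg0 : Submodule.reflection Wᗮ u₀ = -u₀ :=
    Submodule.reflection_mem_subspace_orthogonalComplement_eq_neg (W.le_orthogonal_orthogonal hu₀W)
  have hneg1 : Submodule.reflection Wᗮ u₁ = -u₁ :=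
    Submodule.reflection_mem_subspace_orthogonalComplement_eq_neg (W.le_orthogonal_orthogonal hu₁W)
  refine ⟨Submodule.reflection Wᗮ, ?_, hneg0, hneg1, hfix⟩
  -- determinant computation
  have horth : Orthonormal ℝ ((↑) : ({u₀, u₁} : Set (EuclideanSpace ℝ (Fin d))) →
      EuclideanSpace ℝ (Fin d)) := by
    rw [orthonormal_subtype_iff_ite]
    intro v hv w hw
    simp only [Set.mem_insert_iff, Set.mem_singleton_iff] at hv hw
    rcases hv with rfl | rfl <;> rcases hw with rfl | rfl
    · rw [if_pos rfl, real_inner_self_eq_norm_sq, n0]; norm_num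
    · rw [if_neg hne]; exact h01
    · rw [if_neg (Ne.symm hne), real_inner_comm]; exact h01
    · rw [if_pos rfl, real_inner_self_eq_norm_sq, n1]; norm_num
  obtain ⟨u, b, hsu, hb⟩ := horth.exists_orthonormalBasis_extension
  have hu₀u : u₀ ∈ u := hsu (by simp)
  have hu₁u : u₁ ∈ u := hsu (by simp)
  set i₀ : ↥u := ⟨u₀, hu₀u⟩ with hi₀
  set i₁ : ↥u := ⟨u₁, hu₁u⟩ with hi₁
  have hi : i₀ ≠ i₁ := by simp [hi₀, hi₁, Subtype.ext_iff, hne]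
  set ε : ↥u → ℝ := fun x => if x = i₀ ∨ x = i₁ then -1 else 1 with hε
  have hRb : ∀ x : ↥u, Submodule.reflection Wᗮ (b x) = ε x • b x := by
    intro x
    rcases eq_or_ne x i₀ with rfl | hx0
    · rw [hb]
      show Submodule.reflection Wᗮ u₀ = ε i₀ • u₀
      rw [hneg0, hε]
      simp
    rcases eq_or_ne x i₁ with rfl | hx1
    · rw [hb]
      show Submodule.reflection Wᗮ u₁ = ε i₁ • u₁
      rw [hneg1, hε]
      simp
    · have hbx : b x = (x : EuclideanSpace ℝ (Fin d)) := by rw [hb]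
      have hb₀ : b i₀ = u₀ := by rw [hb]
      have hb₁ : b i₁ = u₁ := by rw [hb]
      have hx0' : ⟪u₀, b x⟫ = 0 := by
        rw [← hb₀]; exact b.orthonormal.2 (Ne.symm hx0)
      have hx1' : ⟪u₁, b x⟫ = 0 := by
        rw [← hb₁]; exact b.orthonormal.2 (Ne.symm hx1)
      rw [hfix _ hx0' hx1', hε]
      simp [hx0, hx1]
  show LinearMap.det _ = 1
  rw [← LinearMap.det_toMatrix b.toBasis]
  have hmat : LinearMap.toMatrix b.toBasis b.toBasis
      ((Submodule.reflection Wᗮ).toLinearEquiv :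
        EuclideanSpace ℝ (Fin d) →ₗ[ℝ] EuclideanSpace ℝ (Fin d)) = Matrix.diagonal ε := by
    ext x y
    rw [LinearMap.toMatrix_apply]
    have h1 : ((Submodule.reflection Wᗮ).toLinearEquiv :
        EuclideanSpace ℝ (Fin d) →ₗ[ℝ] EuclideanSpace ℝ (Fin d)) (b.toBasis y)
        = ε y • b y := by
      rw [b.coe_toBasis]
      exact hRb y
    rw [h1, map_smul, ← b.coe_toBasis, Module.Basis.repr_self, Finsupp.smul_apply,
      Finsupp.single_apply, Matrix.diagonal]
    rcases eq_or_ne x y with rfl | hxy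
    · simp
    · simp [hxy, Ne.symm hxy]
  rw [hmat, Matrix.det_diagonal,
    ← Finset.mul_prod_erase Finset.univ ε (Finset.mem_univ i₀),
    ← Finset.mul_prod_erase _ ε (Finset.mem_erase.mpr ⟨Ne.symm hi, Finset.mem_univ i₁⟩)]
  have hrest : ∏ x ∈ (Finset.univ.erase i₀).erase i₁, ε x = 1 := by
    apply Finset.prod_eq_one
    intro x hx
    have hx1 := (Finset.mem_erase.mp hx).1
    have hx0 := (Finset.mem_erase.mp (Finset.mem_erase.mp hx).2).1
    simp [hε, hx0, hx1]
  rw [hrest, hε]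
  norm_num

lemma mem_span_aux (d n k : ℕ)
    (h : (Fin n → EuclideanSpace ℝ (Fin d)) → (Fin n → (Fin k → ℝ)) →
      (Fin n → EuclideanSpace ℝ (Fin d)))
    (hrot : ∀ R : EuclideanSpace ℝ (Fin d) ≃ₗᵢ[ℝ] EuclideanSpace ℝ (Fin d),
      IsSpecialOrthogonal R → ∀ X H, h (fun a => R (X a)) H = fun a => R (h X H a))
    (htrans : ∀ (t : EuclideanSpace ℝ (Fin d)) X H,
      h (fun a => X a + t) H = h X H)
    (X : Fin n → EuclideanSpace ℝ (Fin d)) (H : Fin n → (Fin k → ℝ)) (a : Fin n)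
    (hnd : Module.finrank ℝ (Submodule.span ℝ (Set.range fun c => X c - X a)) ≠ d - 1) :
    h X H a ∈ Submodule.span ℝ (Set.range fun c => X c - X a) := by
  classical
  set V := Submodule.span ℝ (Set.range fun c => X c - X a) with hVdef
  have hEd : Module.finrank ℝ (EuclideanSpace ℝ (Fin d)) = d := finrank_euclideanSpace_fin
  have hVd : Module.finrank ℝ V ≤ d := by
    have := V.finrank_le
    rwa [hEd] at this
  rcases eq_or_ne (Module.finrank ℝ V) d with hfull | hnefull
  · have : V = ⊤ := Submodule.eq_top_of_finrank_eq (by rw [hfull, hEd])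
    rw [this]
    exact Submodule.mem_top
  · have hsum := V.finrank_add_finrank_orthogonal
    rw [hEd] at hsum
    have h2 : 2 ≤ Module.finrank ℝ Vᗮ := by omega
    set m := Module.finrank ℝ Vᗮ with hm
    set b := stdOrthonormalBasis ℝ Vᗮ with hbdef
    have hinner : ∀ i : Fin m,
        ⟪((b i : Vᗮ) : EuclideanSpace ℝ (Fin d)), h X H a⟫ = 0 := by
      intro i
      obtain ⟨j, hj⟩ : ∃ j : Fin m, j ≠ i := by
        rcases eq_or_ne i ⟨0, by omega⟩ with rfl | hi
        · exact ⟨⟨1, by omega⟩, by simp [Fin.ext_iff]⟩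
        · exact ⟨⟨0, by omega⟩, Ne.symm hi⟩
      set u₀ : EuclideanSpace ℝ (Fin d) := ((b i : Vᗮ) : EuclideanSpace ℝ (Fin d)) with hu₀
      set u₁ : EuclideanSpace ℝ (Fin d) := ((b j : Vᗮ) : EuclideanSpace ℝ (Fin d)) with hu₁
      have hu₀V : u₀ ∈ Vᗮ := (b i).2
      have hu₁V : u₁ ∈ Vᗮ := (b j).2
      have h01 : ⟪u₀, u₁⟫ = 0 := by
        exact b.orthonormal.2 (Ne.symm hj)
      have n0 : ‖u₀‖ = 1 := by
        exact b.orthonormal.1 i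
      have n1 : ‖u₁‖ = 1 := by
        exact b.orthonormal.1 j
      obtain ⟨R, hR, hRu₀, _, hfix⟩ := exists_so_reflection d u₀ u₁ h01 n0 n1
      have hfixV : ∀ x ∈ V, R x = x := by
        intro x hx
        refine hfix x ?_ ?_
        · rw [real_inner_comm]
          exact (Submodule.mem_orthogonal V u₀).mp hu₀V x hx
        · rw [real_inner_comm]
          exact (Submodule.mem_orthogonal V u₁).mp hu₁V x hx
      have hXt : (fun c => R (X c)) = fun c => X c + (R (X a) - X a) := by
        funext c
        have hv : R (X c - X a) = X c - X a :=
          hfixV _ (Submodule.subset_span ⟨c, rfl⟩)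
        calc R (X c) = R (X a + (X c - X a)) := by rw [add_sub_cancel]
          _ = R (X a) + R (X c - X a) := map_add _ _ _
          _ = X c + (R (X a) - X a) := by rw [hv]; abel
      have hfixw : R (h X H a) = h X H a := by
        calc R (h X H a) = h (fun c => R (X c)) H a := (congrFun (hrot R hR X H) a).symm
          _ = h (fun c => X c + (R (X a) - X a)) H a := by rw [hXt]
          _ = h X H a := congrFun (htrans (R (X a) - X a) X H) a
      have hkey := R.inner_map_map u₀ (h X H a)
      rw [hRu₀, hfixw, inner_neg_left] at hkey
      linarith
    have hmem : h X H a ∈ Vᗮᗮ := by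
      intro uu huu
      have hrepr := congrArg (Subtype.val) (b.sum_repr ⟨uu, huu⟩)
      simp only [Submodule.coe_sum, Submodule.coe_smul] at hrepr
      rw [← hrepr, sum_inner]
      apply Finset.sum_eq_zero
      intro i _
      rw [real_inner_smul_left, hinner, mul_zero]
    rwa [Submodule.orthogonal_orthogonal] at hmem

/-- Theorem C (th:univ_vec): any translation-invariant, rotation- and
permutation-equivariant vector-valued function of a point cloud (with scalar features)
is, away from configurations whose relative vectors span a `(d-1)`-dimensional space,
a linear combination of the relative position vectors with invariant scalar
coefficient functions. -/
theorem univ_vec (d n k : ℕ) (hn : 1 ≤ n)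
    (h : (Fin n → EuclideanSpace ℝ (Fin d)) → (Fin n → (Fin k → ℝ)) →
      (Fin n → EuclideanSpace ℝ (Fin d)))
    (hperm : ∀ (σ : Equiv.Perm (Fin n)) X H,
      h (fun a => X (σ⁻¹ a)) (fun a => H (σ⁻¹ a)) = fun a => h X H (σ⁻¹ a))
    (hrot : ∀ R : EuclideanSpace ℝ (Fin d) ≃ₗᵢ[ℝ] EuclideanSpace ℝ (Fin d),
      IsSpecialOrthogonal R → ∀ X H, h (fun a => R (X a)) H = fun a => R (h X H a))
    (htrans : ∀ (t : EuclideanSpace ℝ (Fin d)) X H,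
      h (fun a => X a + t) H = h X H) :
    ∃ f : Fin n → (Fin n → EuclideanSpace ℝ (Fin d)) → (Fin n → (Fin k → ℝ)) →
        (Fin n → ℝ),
      -- each f⁽ᶜ⁾ is translation-invariant
      (∀ c (t : EuclideanSpace ℝ (Fin d)) X H,
        f c (fun a => X a + t) H = f c X H) ∧
      -- each f⁽ᶜ⁾ is rotation-invariant
      (∀ c, ∀ R : EuclideanSpace ℝ (Fin d) ≃ₗᵢ[ℝ] EuclideanSpace ℝ (Fin d),
        IsSpecialOrthogonal R → ∀ X H, f c (fun a => R (X a)) H = f c X H) ∧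
      -- the family is permutation-equivariant: f⁽σ c⁾(σ·X, σ·H)_{σ a} = f⁽ᶜ⁾(X,H)_a
      (∀ (σ : Equiv.Perm (Fin n)) (c a : Fin n) X H,
        f (σ c) (fun b => X (σ⁻¹ b)) (fun b => H (σ⁻¹ b)) (σ a) = f c X H a) ∧
      -- the decomposition holds on non-degenerate configurations
      (∀ X H,
        (∀ a : Fin n,
          Module.finrank ℝ
            (Submodule.span ℝ (Set.range fun c => X c - X a)) ≠ d - 1) →
        ∀ a : Fin n,
          h X H a = ∑ c ∈ Finset.univ.erase a, f c X H a • (X c - X a)) := by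
  refine ⟨fun c X H a => coeffsAux d n (fun b => X b - X a) (h X H a) c, ?_, ?_, ?_, ?_⟩
  · -- translation invariance
    intro c t X H
    funext a
    dsimp only
    rw [htrans t X H]
    simp only [add_sub_add_right_eq_sub]
  · -- rotation invariance
    intro c R hR X H
    funext a
    dsimp only
    rw [hrot R hR X H]
    dsimp only
    have h1 : (fun b => R (X b) - R (X a)) = fun b => R (X b - X a) := by
      funext b; rw [map_sub]
    rw [h1]
    exact congrArg (fun v : EuclideanSpace ℝ (Fin n) => v c) (coeffsAux_rot R (fun b => X b - X a) (h X H a))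
  · -- permutation equivariance
    intro σ c a X H
    dsimp only
    have hw : h (fun b => X (σ⁻¹ b)) (fun b => H (σ⁻¹ b)) (σ a) = h X H a := by
      have := congrFun (hperm σ X H) (σ a)
      simpa using this
    rw [hw]
    simp only [Equiv.Perm.coe_inv, Equiv.symm_apply_apply]
    exact coeffsAux_perm σ (fun c => X c - X a) (h X H a) c
  · -- decomposition
    intro X H hnd a
    have hmem := mem_span_aux d n k h hrot htrans X H a (hnd a)
    rw [Submodule.mem_span_range_iff_exists_fun] at hmem
    obtain ⟨g, hg⟩ := hmem
    have hex : ∃ g', TmapAux d n (fun b => X b - X a) g' = h X H a := ⟨WithLp.toLp 2 g, hg⟩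
    have hsolve := coeffsAux_spec hex
    rw [TmapAux_apply] at hsolve
    dsimp only
    have herase : ∑ c ∈ Finset.univ.erase a,
        coeffsAux d n (fun b => X b - X a) (h X H a) c • (X c - X a)
        = ∑ c, coeffsAux d n (fun b => X b - X a) (h X H a) c • (X c - X a) :=
      Finset.sum_erase _ (by simp)
    rw [herase]
    exact hsolve.symm
end

section
/- Let d, n be natural numbers. Let h : (Fin n → EuclideanSpace ℝ (Fin d)) → EuclideanSpace ℝ (Fin d) be SO(d)-equivariant, i.e. h(R·X) = R (h X) for every R ∈ SO(d) and every X. Then there exist n SO(d)-invariant functions f_c : (Fin n → EuclideanSpace ℝ (Fin d)) → ℝ, c ∈ Fin n (i.e. f_c(R·X) = f_c(X) for all R ∈ SO(d)), such that for every X whose family of vectors {X_c : c ∈ Fin n} does not span a subspace of dimension exactly d − 1, one has h(X) = Σ_{c ∈ Fin n} f_c(X) • X_c. -/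
open scoped RealInnerProductSpace

open Module Submodule

/-- The linear map sending a coefficient vector to the corresponding linear combination. -/
noncomputable def combMap (d n : ℕ) (X : Fin n → EuclideanSpace ℝ (Fin d)) :
    EuclideanSpace ℝ (Fin n) →ₗ[ℝ] EuclideanSpace ℝ (Fin d) :=
  (Fintype.linearCombination ℝ X).comp
    (WithLp.linearEquiv 2 ℝ (Fin n → ℝ)).toLinearMap

lemma combMap_apply (d n : ℕ) (X : Fin n → EuclideanSpace ℝ (Fin d))
    (g : EuclideanSpace ℝ (Fin n)) : combMap d n X g = ∑ i, g i • X i := rfl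

lemma range_combMap (d n : ℕ) (X : Fin n → EuclideanSpace ℝ (Fin d)) :
    LinearMap.range (combMap d n X) = Submodule.span ℝ (Set.range X) := by
  rw [combMap, LinearMap.range_comp, LinearEquiv.range, Submodule.map_top,
    Fintype.range_linearCombination]

open scoped Classical in
/-- The minimal-norm solution of `combMap d n X g = h X` (the unique solution orthogonal to the
kernel), or `0` if no solution exists. -/
noncomputable def sol (d n : ℕ) (h : (Fin n → EuclideanSpace ℝ (Fin d)) → EuclideanSpace ℝ (Fin d))
    (X : Fin n → EuclideanSpace ℝ (Fin d)) : EuclideanSpace ℝ (Fin n) :=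
  if hx : ∃ g, g ∈ (LinearMap.ker (combMap d n X))ᗮ ∧ combMap d n X g = h X then hx.choose
  else 0

lemma sol_unique (d n : ℕ) (h : (Fin n → EuclideanSpace ℝ (Fin d)) → EuclideanSpace ℝ (Fin d))
    (X : Fin n → EuclideanSpace ℝ (Fin d)) {g g' : EuclideanSpace ℝ (Fin n)}
    (hg : g ∈ (LinearMap.ker (combMap d n X))ᗮ ∧ combMap d n X g = h X)
    (hg' : g' ∈ (LinearMap.ker (combMap d n X))ᗮ ∧ combMap d n X g' = h X) : g = g' := by
  have hmem : g - g' ∈ (LinearMap.ker (combMap d n X))ᗮ := Submodule.sub_mem _ hg.1 hg'.1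
  have hker : g - g' ∈ LinearMap.ker (combMap d n X) := by
    rw [LinearMap.mem_ker, map_sub, hg.2, hg'.2, sub_self]
  have := (LinearMap.ker (combMap d n X)).orthogonal_disjoint.le_bot ⟨hker, hmem⟩
  rw [Submodule.mem_bot] at this
  rw [← sub_eq_zero]
  exact this

lemma sol_spec (d n : ℕ) (h : (Fin n → EuclideanSpace ℝ (Fin d)) → EuclideanSpace ℝ (Fin d))
    (X : Fin n → EuclideanSpace ℝ (Fin d))
    (hx : h X ∈ Submodule.span ℝ (Set.range X)) :
    combMap d n X (sol d n h X) = h X := by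
  rw [← range_combMap d n X] at hx
  obtain ⟨g₀, hg₀⟩ := hx
  set K := LinearMap.ker (combMap d n X)
  set g : EuclideanSpace ℝ (Fin n) := (orthogonalProjection Kᗮ g₀ : EuclideanSpace ℝ (Fin n))
  have hgK : g ∈ Kᗮ := (orthogonalProjection Kᗮ g₀).2
  have hdiff : g₀ - g ∈ K := by
    have := sub_starProjection_mem_orthogonal (K := Kᗮ) g₀
    rwa [Submodule.orthogonal_orthogonal] at this
  have hgeq : combMap d n X g = h X := by
    have : combMap d n X (g₀ - g) = 0 := hdiff
    rw [map_sub, sub_eq_zero] at this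
    rw [← this, hg₀]
  have hex : ∃ g, g ∈ Kᗮ ∧ combMap d n X g = h X := ⟨g, hgK, hgeq⟩
  rw [sol, dif_pos hex]
  exact hex.choose_spec.2

lemma sol_invariant (d n : ℕ)
    (h : (Fin n → EuclideanSpace ℝ (Fin d)) → EuclideanSpace ℝ (Fin d))
    (hrot : ∀ R : EuclideanSpace ℝ (Fin d) ≃ₗᵢ[ℝ] EuclideanSpace ℝ (Fin d),
      IsSpecialOrthogonal R → ∀ X, h (fun a => R (X a)) = R (h X))
    (R : EuclideanSpace ℝ (Fin d) ≃ₗᵢ[ℝ] EuclideanSpace ℝ (Fin d))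
    (hR : IsSpecialOrthogonal R) (X : Fin n → EuclideanSpace ℝ (Fin d)) :
    sol d n h (fun a => R (X a)) = sol d n h X := by
  have hM : combMap d n (fun a => R (X a))
      = (R.toLinearEquiv : EuclideanSpace ℝ (Fin d) →ₗ[ℝ] EuclideanSpace ℝ (Fin d)).comp
        (combMap d n X) := by
    apply LinearMap.ext
    intro g
    simp [combMap_apply, LinearMap.comp_apply, map_sum, map_smul]
  have hker : LinearMap.ker (combMap d n (fun a => R (X a))) = LinearMap.ker (combMap d n X) := by
    rw [hM, LinearMap.ker_comp, LinearEquiv.ker, Submodule.comap_bot]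
  have hiff : ∀ g : EuclideanSpace ℝ (Fin n),
      (g ∈ (LinearMap.ker (combMap d n (fun a => R (X a))))ᗮ
        ∧ combMap d n (fun a => R (X a)) g = h (fun a => R (X a)))
      ↔ (g ∈ (LinearMap.ker (combMap d n X))ᗮ ∧ combMap d n X g = h X) := by
    intro g
    rw [hker, hM, hrot R hR X]
    constructor
    · rintro ⟨h1, h2⟩
      exact ⟨h1, R.injective h2⟩
    · rintro ⟨h1, h2⟩
      exact ⟨h1, by rw [LinearMap.comp_apply]; exact congrArg R h2⟩
  by_cases hx : ∃ g, g ∈ (LinearMap.ker (combMap d n X))ᗮ ∧ combMap d n X g = h X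
  · have hx' : ∃ g, g ∈ (LinearMap.ker (combMap d n (fun a => R (X a))))ᗮ
        ∧ combMap d n (fun a => R (X a)) g = h (fun a => R (X a)) :=
      ⟨hx.choose, (hiff _).mpr hx.choose_spec⟩
    rw [sol, sol, dif_pos hx', dif_pos hx]
    exact sol_unique d n h X ((hiff _).mp hx'.choose_spec) hx.choose_spec
  · have hx' : ¬∃ g, g ∈ (LinearMap.ker (combMap d n (fun a => R (X a))))ᗮ
        ∧ combMap d n (fun a => R (X a)) g = h (fun a => R (X a)) := by
      intro ⟨g, hg⟩
      exact hx ⟨g, (hiff g).mp hg⟩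
    rw [sol, sol, dif_neg hx', dif_neg hx]


lemma mem_span_of_so_equivariant (d n : ℕ)
    (h : (Fin n → EuclideanSpace ℝ (Fin d)) → EuclideanSpace ℝ (Fin d))
    (hrot : ∀ R : EuclideanSpace ℝ (Fin d) ≃ₗᵢ[ℝ] EuclideanSpace ℝ (Fin d),
      IsSpecialOrthogonal R → ∀ X, h (fun a => R (X a)) = R (h X))
    (X : Fin n → EuclideanSpace ℝ (Fin d))
    (hX : Module.finrank ℝ (Submodule.span ℝ (Set.range X)) ≠ d - 1) :
    h X ∈ Submodule.span ℝ (Set.range X) := by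
  set V := Submodule.span ℝ (Set.range X) with hV
  have hsum : finrank ℝ V + finrank ℝ Vᗮ = d := by
    simpa [finrank_euclideanSpace_fin] using V.finrank_add_finrank_orthogonal
  by_cases hd : finrank ℝ V = d
  · have : V = ⊤ := Submodule.eq_top_of_finrank_eq (by rw [hd, finrank_euclideanSpace_fin])
    rw [this]; exact Submodule.mem_top
  have hW2 : 2 ≤ finrank ℝ Vᗮ := by omega
  set p : EuclideanSpace ℝ (Fin d) := (orthogonalProjection V (h X) : EuclideanSpace ℝ (Fin d))
    with hp
  set w : EuclideanSpace ℝ (Fin d) := h X - p with hwdef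
  have hw : w ∈ Vᗮ := sub_starProjection_mem_orthogonal (h X)
  suffices hw0 : w = 0 by
    have : h X = p := by rw [← sub_eq_zero]; exact hw0
    rw [this]; exact (orthogonalProjection V (h X)).2
  by_contra hw0
  -- find u ∈ Vᗮ not in the line through w
  have hnle : ¬(Vᗮ ≤ Submodule.span ℝ {w}) := by
    intro hle
    have := Submodule.finrank_mono hle
    rw [finrank_span_singleton hw0] at this
    omega
  obtain ⟨u, huW, huw⟩ := SetLike.not_le_iff_exists.mp hnle
  set c : ℝ := (⟪w, u⟫ / ‖w‖ ^ 2) with hc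
  set u' : EuclideanSpace ℝ (Fin d) := u - c • w with hu'def
  have hu'W : u' ∈ Vᗮ := Vᗮ.sub_mem huW (Vᗮ.smul_mem _ hw)
  have hwu' : ⟪w, u'⟫ = 0 := by
    rw [hu'def, inner_sub_right, inner_smul_right, hc, real_inner_self_eq_norm_sq,
      div_mul_cancel₀, sub_self]
    exact pow_ne_zero 2 (norm_ne_zero_iff.mpr hw0)
  have hu'0 : u' ≠ 0 := by
    intro h0
    apply huw
    rw [Submodule.mem_span_singleton]
    exact ⟨c, by rw [eq_comm, ← sub_eq_zero]; simpa [hu'def] using h0⟩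
  -- the rotation: product of two hyperplane reflections
  set R1 := reflection (Submodule.span ℝ {w})ᗮ with hR1
  set R2 := reflection (Submodule.span ℝ {u'})ᗮ with hR2
  set R := R2.trans R1 with hRdef
  have hdet : IsSpecialOrthogonal R := by
    show LinearMap.det _ = 1
    have hcomp : (R.toLinearEquiv : EuclideanSpace ℝ (Fin d) →ₗ[ℝ] EuclideanSpace ℝ (Fin d))
        = R1.toLinearMap ∘ₗ R2.toLinearMap := rfl
    rw [hcomp, LinearMap.det_comp, hR1, hR2, det_reflection, det_reflection,
      Submodule.orthogonal_orthogonal, Submodule.orthogonal_orthogonal,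
      finrank_span_singleton hw0, finrank_span_singleton hu'0]
    norm_num
  have hfix : ∀ v ∈ V, R v = v := by
    intro v hv
    have hv1 : v ∈ (Submodule.span ℝ {w})ᗮ :=
      Submodule.orthogonal_le (Submodule.span_le.mpr (Set.singleton_subset_iff.mpr hw))
        (V.le_orthogonal_orthogonal hv)
    have hv2 : v ∈ (Submodule.span ℝ {u'})ᗮ :=
      Submodule.orthogonal_le (Submodule.span_le.mpr (Set.singleton_subset_iff.mpr hu'W))
        (V.le_orthogonal_orthogonal hv)
    show R1 (R2 v) = v
    rw [reflection_mem_subspace_eq_self hv2, reflection_mem_subspace_eq_self hv1]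
  have hXfix : (fun a => R (X a)) = X :=
    funext fun a => hfix _ (Submodule.subset_span (Set.mem_range_self a))
  have hRh : R (h X) = h X := by
    have := hrot R hdet X
    rw [hXfix] at this
    exact this.symm
  have hRw : R w = -w := by
    have h2 : R2 w = w := by
      apply reflection_mem_subspace_eq_self
      intro x hx
      obtain ⟨a, rfl⟩ := Submodule.mem_span_singleton.mp hx
      rw [inner_smul_left]
      simp [real_inner_comm w u' ▸ hwu']
    show R1 (R2 w) = -w
    rw [h2]
    exact reflection_orthogonalComplement_singleton_eq_neg w
  have hRp : R p = p := hfix _ (orthogonalProjection V (h X)).2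
  have : h X = p + -w := by
    have h1 : h X = p + w := by rw [hwdef]; abel
    calc h X = R (h X) := hRh.symm
    _ = R p + R w := by rw [h1, map_add]
    _ = p + -w := by rw [hRp, hRw]
  have h1 : h X = p + w := by rw [hwdef]; abel
  have h2 : w = -w := add_left_cancel (h1.symm.trans this)
  have h3 : (2 : ℝ) • w = 0 := by rw [two_smul]; nth_rewrite 1 [h2]; abel
  exact hw0 (by simpa using (smul_eq_zero.mp h3).resolve_left (by norm_num))

theorem so_equivariant_is_linear_combination (d n : ℕ)
    (h : (Fin n → EuclideanSpace ℝ (Fin d)) → EuclideanSpace ℝ (Fin d))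
    (hrot : ∀ R : EuclideanSpace ℝ (Fin d) ≃ₗᵢ[ℝ] EuclideanSpace ℝ (Fin d),
      IsSpecialOrthogonal R → ∀ X, h (fun a => R (X a)) = R (h X)) :
    ∃ f : Fin n → (Fin n → EuclideanSpace ℝ (Fin d)) → ℝ,
      (∀ c, ∀ R : EuclideanSpace ℝ (Fin d) ≃ₗᵢ[ℝ] EuclideanSpace ℝ (Fin d),
        IsSpecialOrthogonal R → ∀ X, f c (fun a => R (X a)) = f c X) ∧
      (∀ X : Fin n → EuclideanSpace ℝ (Fin d),
        Module.finrank ℝ (Submodule.span ℝ (Set.range X)) ≠ d - 1 →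
        h X = ∑ c, f c X • X c) := by
  refine ⟨fun c X => sol d n h X c, ?_, ?_⟩
  · intro c R hR X
    show sol d n h (fun a => R (X a)) c = sol d n h X c
    rw [sol_invariant d n h hrot R hR X]
  · intro X hX
    have hmem := mem_span_of_so_equivariant d n h hrot X hX
    have hs := sol_spec d n h X hmem
    rw [← hs, combMap_apply]
end
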